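/- Define the integer sequence (d_n) by d₀ = 1, d₁ = 3, d₂ = 9, d₃ = 27 and d_n = 3·d_{n−1} − 3·d_{n−3} + d_{n−4} for n ≥ 4. Then d_n > 0 for all n and the ratios d_{n+1}/d_n converge to (3+√5)/2 ≈ 2.618033988 as n → ∞. -/

import Mathlib

open Filter

noncomputable def hvα : ℝ := (3 + Real.sqrt 5) / 2
noncomputable def hvβ : ℝ := (3 - Real.sqrt 5) / 2
noncomputable def hvg (n : ℕ) : ℝ := (8 * (hvα ^ n + hvβ ^ n) - (-1 : ℝ) ^ n) / 5 - 2

lemma hv_s2 : Real.sqrt 5 ^ 2 = 5 := Real.sq_sqrt (by norm_num)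

lemma hv_s_lt : 2 < Real.sqrt 5 ∧ Real.sqrt 5 < 3 := by
  have h := hv_s2
  have h0 := Real.sqrt_nonneg 5
  constructor <;> nlinarith

lemma hvα_gt_one : 1 < hvα := by
  have := hv_s_lt.1; unfold hvα; linarith

lemma hvβ_pos : 0 < hvβ := by
  have := hv_s_lt.2; unfold hvβ; linarith

lemma hvβ_lt_one : hvβ < 1 := by
  have := hv_s_lt.1; unfold hvβ; linarith

lemma hvα2 : hvα ^ 2 = 3 * hvα - 1 := by
  unfold hvα; linear_combination hv_s2 / 4

lemma hvβ2 : hvβ ^ 2 = 3 * hvβ - 1 := by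
  unfold hvβ; linear_combination hv_s2 / 4

lemma hvg_rec (n : ℕ) : hvg (n + 2) = 3 * hvg (n + 1) - hvg n + (2 - (-1 : ℝ) ^ n) := by
  simp only [hvg]
  linear_combination (8 * hvα ^ n / 5) * hvα2 + (8 * hvβ ^ n / 5) * hvβ2

lemma hvg0 : hvg 0 = 1 := by simp [hvg]; norm_num

lemma hvg1 : hvg 1 = 3 := by
  simp only [hvg, pow_one]
  unfold hvα hvβ; ring_nf

/-- The Hietarinta–Viallet degree sequence is positive and its successive ratios
`d (n+1) / d n` converge to `(3+√5)/2 ≈ 2.618033988`. -/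
theorem hv_degree_ratios (d : ℕ → ℤ)
    (h0 : d 0 = 1) (h1 : d 1 = 3) (h2 : d 2 = 9) (h3 : d 3 = 27)
    (hrec : ∀ n : ℕ, 4 ≤ n → d n = 3 * d (n - 1) - 3 * d (n - 3) + d (n - 4)) :
    (∀ n : ℕ, 0 < d n) ∧
      Tendsto (fun n : ℕ => (d (n + 1) : ℝ) / (d n : ℝ)) atTop
        (nhds ((3 + Real.sqrt 5) / 2)) := by
  -- Second order recurrence
  have rec2 : ∀ n : ℕ, d (n + 2) = 3 * d (n + 1) - d n + (2 - (-1 : ℤ) ^ n) := by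
    intro n
    induction n using Nat.twoStepInduction with
    | zero => rw [h0, h1, h2]; norm_num
    | one => rw [h1, h2, h3]; norm_num
    | more n ih _ =>
      have h4 := hrec (n + 4) (by omega)
      simp only [show n + 4 - 1 = n + 3 from rfl, show n + 4 - 3 = n + 1 from rfl,
        show n + 4 - 4 = n from rfl] at h4
      have : ((-1 : ℤ) ^ (n + 2)) = (-1 : ℤ) ^ n := by ring
      rw [show n + 2 + 2 = n + 4 from rfl, h4, this]
      linarith [ih]
  -- positivity with growth
  have pos2 : ∀ n : ℕ, 0 < d n ∧ 2 * d n ≤ d (n + 1) := by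
    intro n
    induction n with
    | zero => rw [h0, h1]; norm_num
    | succ n ih =>
      obtain ⟨hp, hle⟩ := ih
      have hp1 : 0 < d (n + 1) := by linarith
      have hr := rec2 n
      have hsgn : (-1 : ℤ) ^ n ≤ 1 := by
        rcases Nat.even_or_odd n with h | h
        · rw [h.neg_one_pow]
        · rw [h.neg_one_pow]; norm_num
      constructor
      · exact hp1
      · have hd : d n ≤ d (n + 1) := by linarith
        linarith
  have hpos : ∀ n : ℕ, 0 < d n := fun n => (pos2 n).1
  refine ⟨hpos, ?_⟩
  -- closed form
  have hg : ∀ n : ℕ, (d n : ℝ) = hvg n := by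
    intro n
    induction n using Nat.twoStepInduction with
    | zero => rw [h0, hvg0]; norm_num
    | one => rw [h1, hvg1]; norm_num
    | more n ih1 ih2 =>
      have hr := rec2 n
      rw [hvg_rec n]
      push_cast [hr, ih1, ih2]
      ring
  have hα0 : (0 : ℝ) < hvα := lt_trans one_pos hvα_gt_one
  have hαn : ∀ n : ℕ, (0 : ℝ) < hvα ^ n := fun n => pow_pos hα0 n
  -- limit of hvg n / hvα ^ n
  have t1 : Tendsto (fun n : ℕ => (hvβ / hvα) ^ n) atTop (nhds 0) := by
    apply tendsto_pow_atTop_nhds_zero_of_lt_one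
    · exact div_nonneg hvβ_pos.le hα0.le
    · rw [div_lt_one hα0]
      linarith [hvβ_lt_one, hvα_gt_one]
  have t2 : Tendsto (fun n : ℕ => ((-1 : ℝ) / hvα) ^ n) atTop (nhds 0) := by
    apply tendsto_pow_atTop_nhds_zero_of_abs_lt_one
    rw [abs_div, abs_neg, abs_one, abs_of_pos hα0, div_lt_one hα0]
    exact hvα_gt_one
  have t3 : Tendsto (fun n : ℕ => (1 / hvα) ^ n) atTop (nhds 0) := by
    apply tendsto_pow_atTop_nhds_zero_of_lt_one
    · positivity
    · rw [div_lt_one hα0]; exact hvα_gt_one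
  have key : ∀ n : ℕ, hvg n / hvα ^ n
      = (8 * (1 + (hvβ / hvα) ^ n) - ((-1 : ℝ) / hvα) ^ n) / 5 - 2 * (1 / hvα) ^ n := by
    intro n
    rw [div_pow, div_pow, div_pow]
    have h := (hαn n).ne'
    field_simp [hvg]
    simp only [hvg]
    ring
  have den : Tendsto (fun n : ℕ => hvg n / hvα ^ n) atTop (nhds (8 / 5)) := by
    have : Tendsto (fun n : ℕ =>
        (8 * (1 + (hvβ / hvα) ^ n) - ((-1 : ℝ) / hvα) ^ n) / 5 - 2 * (1 / hvα) ^ n) atTop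
        (nhds ((8 * (1 + 0) - 0) / 5 - 2 * 0)) := by
      exact ((((tendsto_const_nhds.add t1).const_mul 8).sub t2).div_const 5).sub
        (t3.const_mul 2)
    have h85 : ((8 * (1 + 0) - 0) / 5 - 2 * 0 : ℝ) = 8 / 5 := by norm_num
    rw [h85] at this
    exact this.congr (fun n => (key n).symm)
  have num : Tendsto (fun n : ℕ => hvg (n + 1) / hvα ^ n) atTop (nhds (hvα * (8 / 5))) := by
    have comp : Tendsto (fun n : ℕ => hvg (n + 1) / hvα ^ (n + 1)) atTop (nhds (8 / 5)) :=
      den.comp (tendsto_add_atTop_nat 1)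
    have := comp.const_mul hvα
    refine this.congr (fun n => ?_)
    have h := (hαn (n + 1)).ne'
    rw [pow_succ]
    field_simp
  have ratio : Tendsto (fun n : ℕ => (hvg (n + 1) / hvα ^ n) / (hvg n / hvα ^ n)) atTop
      (nhds ((hvα * (8 / 5)) / (8 / 5))) := num.div den (by norm_num)
  have hlim : (hvα * (8 / 5)) / (8 / 5) = (3 + Real.sqrt 5) / 2 := by
    rw [mul_div_assoc, div_self (by norm_num : (8 : ℝ) / 5 ≠ 0), mul_one]; rfl
  rw [hlim] at ratio
  refine ratio.congr (fun n => ?_)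
  have hgn : hvg n ≠ 0 := by
    rw [← hg n]
    exact_mod_cast (hpos n).ne'
  have h := (hαn n).ne'
  rw [div_div_div_cancel_right₀, hg, hg]
  exact h
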